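/- arXiv:1605.06477 — 2 statements merged into one kernel-verified Lean document; each statement's English description precedes it below -/
import Mathlib

section
/- Let Δ_1,…,Δ_p be square-integrable random variables and c, i distinct indices. If E[Δ_c²] ≥ E[Δ_i²] and E[Δ_c Δ_k] ≥ E[Δ_i Δ_k] for all k ∉ {c,i}, then E[(Σ_{k≠c} Δ_k)²] ≤ E[(Σ_{k≠i} Δ_k)²]. -/
open MeasureTheory Finset

/-- Optimality: under the second-moment and cross-correlation dominance of `c`,
correcting `c` gives a smaller expected loss than correcting `i`. -/
theorem stmt_2 {Ω : Type*} [MeasurableSpace Ω] (μ : Measure Ω) [IsProbabilityMeasure μ]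
    {p : ℕ} (Δ : Fin p → Ω → ℝ) (hΔ : ∀ k, MemLp (Δ k) 2 μ)
    (c i : Fin p) (hci : c ≠ i)
    (h1 : ∫ ω, (Δ c ω) ^ 2 ∂μ ≥ ∫ ω, (Δ i ω) ^ 2 ∂μ)
    (h2 : ∀ k, k ≠ c → k ≠ i → ∫ ω, Δ c ω * Δ k ω ∂μ ≥ ∫ ω, Δ i ω * Δ k ω ∂μ) :
    ∫ ω, (∑ k ∈ univ \ {c}, Δ k ω) ^ 2 ∂μ ≤ ∫ ω, (∑ k ∈ univ \ {i}, Δ k ω) ^ 2 ∂μ := by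
  set A : Finset (Fin p) := univ \ {c, i} with hA
  have hiA : i ∉ A := by simp [hA]
  have hcA : c ∉ A := by simp [hA]
  have hsetc : (univ \ {c} : Finset (Fin p)) = insert i A := by
    ext k
    simp only [hA, Finset.mem_sdiff, Finset.mem_univ, true_and, Finset.mem_singleton,
      Finset.mem_insert]
    constructor
    · intro hk
      by_cases h : k = i
      · exact Or.inl h
      · exact Or.inr (fun hor => hor.elim hk h)
    · rintro (rfl | h)
      · exact fun h => hci h.symm
      · exact fun hk => h (Or.inl hk)
  have hseti : (univ \ {i} : Finset (Fin p)) = insert c A := by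
    ext k
    simp only [hA, Finset.mem_sdiff, Finset.mem_univ, true_and, Finset.mem_singleton,
      Finset.mem_insert]
    constructor
    · intro hk
      by_cases h : k = c
      · exact Or.inl h
      · exact Or.inr (fun hor => hor.elim h hk)
    · rintro (rfl | h)
      · exact fun h => hci h
      · exact fun hk => h (Or.inr hk)
  set T : Ω → ℝ := fun ω => ∑ k ∈ A, Δ k ω with hT
  have hTmem : MemLp T 2 μ := by
    have hEq : (∑ k ∈ A, Δ k) = T := by funext ω; simp [hT, Finset.sum_apply]
    exact hEq ▸ memLp_finset_sum' (μ := μ) A (fun k _ => hΔ k)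
  have hmulgen : ∀ {f g : Ω → ℝ}, MemLp f 2 μ → MemLp g 2 μ →
      Integrable (fun ω => f ω * g ω) μ := by
    intro f g hf hg
    have h : MemLp (f • g) 1 μ :=
      hg.smul hf
    rw [memLp_one_iff_integrable] at h
    simpa [Pi.smul_apply, smul_eq_mul, Pi.mul_def] using h
  have hmul : ∀ j k : Fin p, Integrable (fun ω => Δ j ω * Δ k ω) μ :=
    fun j k => hmulgen (hΔ j) (hΔ k)
  have hmulT : ∀ j : Fin p, Integrable (fun ω => Δ j ω * T ω) μ :=
    fun j => hmulgen (hΔ j) hTmem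
  have hsq : ∀ j : Fin p, Integrable (fun ω => (Δ j ω) ^ 2) μ := by
    intro j; simpa [sq] using hmul j j
  have hTsq : Integrable (fun ω => (T ω) ^ 2) μ := by
    simpa [sq] using hmulgen hTmem hTmem
  have key : ∀ j : Fin p,
      ∫ ω, (Δ j ω + T ω) ^ 2 ∂μ =
        ∫ ω, (Δ j ω) ^ 2 ∂μ + 2 * (∑ k ∈ A, ∫ ω, Δ j ω * Δ k ω ∂μ)
          + ∫ ω, (T ω) ^ 2 ∂μ := by
    intro j
    have hexp : ∀ ω, (Δ j ω + T ω) ^ 2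
        = (Δ j ω) ^ 2 + 2 * (Δ j ω * T ω) + (T ω) ^ 2 := by intro ω; ring
    calc ∫ ω, (Δ j ω + T ω) ^ 2 ∂μ
        = ∫ ω, ((Δ j ω) ^ 2 + 2 * (Δ j ω * T ω) + (T ω) ^ 2) ∂μ := by
          simp_rw [hexp]
      _ = ∫ ω, (Δ j ω) ^ 2 ∂μ + 2 * ∫ ω, Δ j ω * T ω ∂μ + ∫ ω, (T ω) ^ 2 ∂μ := by
          have hfg : Integrable (fun ω => Δ j ω ^ 2 + 2 * (Δ j ω * T ω)) μ :=
            (hsq j).add ((hmulT j).const_mul 2)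
          rw [integral_add hfg hTsq, integral_add (hsq j) ((hmulT j).const_mul 2),
            integral_const_mul]
      _ = _ := by
          congr 2
          rw [hT]
          have : (fun ω => Δ j ω * ∑ k ∈ A, Δ k ω)
              = fun ω => ∑ k ∈ A, Δ j ω * Δ k ω := by
            funext ω; rw [Finset.mul_sum]
          rw [this, integral_finset_sum A (fun k _ => hmul j k)]
  have hsumi : ∀ ω, ∑ k ∈ univ \ {c}, Δ k ω = Δ i ω + T ω := by
    intro ω; rw [hsetc, Finset.sum_insert hiA]
  have hsumc : ∀ ω, ∑ k ∈ univ \ {i}, Δ k ω = Δ c ω + T ω := by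
    intro ω; rw [hseti, Finset.sum_insert hcA]
  simp_rw [hsumi, hsumc, key i, key c]
  have hcross : ∑ k ∈ A, ∫ ω, Δ i ω * Δ k ω ∂μ ≤ ∑ k ∈ A, ∫ ω, Δ c ω * Δ k ω ∂μ := by
    apply Finset.sum_le_sum
    intro k hk
    simp only [hA, Finset.mem_sdiff, Finset.mem_insert, Finset.mem_singleton] at hk
    exact h2 k (fun h => hk.2 (Or.inl h)) (fun h => hk.2 (Or.inr h))
  have := mul_le_mul_of_nonneg_left hcross (by norm_num : (0:ℝ) ≤ 2)
  linarith [h1]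
end

section
/- Under the conditions E[Δ_c²] ≥ E[Δ_i²] for all i ≠ c and E[Δ_c Δ_k] ≥ E[Δ_i Δ_k] for all i ≠ k ≠ c, the index c minimizes the post-feedback loss: E[(Σ_{k≠c} Δ_k)²] = min over i of E[(Σ_{k≠i} Δ_k)²]. -/
open MeasureTheory Finset

lemma memL2_mul_integrable {Ω : Type*} [MeasurableSpace Ω] {μ : Measure Ω} {f g : Ω → ℝ}
    (hf : MemLp f 2 μ) (hg : MemLp g 2 μ) : Integrable (fun ω => f ω * g ω) μ := by
  have : MemLp (f • g) 1 μ := hg.smul hf (hpqr := ⟨by simp [ENNReal.inv_two_add_inv_two]⟩)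
  exact memLp_one_iff_integrable.mp this

/-- Under the dominance conditions, `c` achieves the minimum post-feedback loss. -/
theorem stmt_3 {Ω : Type*} [MeasurableSpace Ω] (μ : Measure Ω) [IsProbabilityMeasure μ]
    {p : ℕ} (Δ : Fin p → Ω → ℝ) (hΔ : ∀ k, MemLp (Δ k) 2 μ) (c : Fin p)
    (h1 : ∀ i, i ≠ c → ∫ ω, (Δ c ω) ^ 2 ∂μ ≥ ∫ ω, (Δ i ω) ^ 2 ∂μ)
    (h2 : ∀ i k, i ≠ k → k ≠ c → i ≠ c →
      ∫ ω, Δ c ω * Δ k ω ∂μ ≥ ∫ ω, Δ i ω * Δ k ω ∂μ) :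
    IsLeast (Set.range fun i : Fin p => ∫ ω, (∑ k ∈ univ \ {i}, Δ k ω) ^ 2 ∂μ)
      (∫ ω, (∑ k ∈ univ \ {c}, Δ k ω) ^ 2 ∂μ) := by
  constructor
  · exact ⟨c, rfl⟩
  · rintro x ⟨i, rfl⟩
    simp only
    by_cases hic : i = c
    · subst hic; exact le_rfl
    -- integrability facts
    have hS : ∀ j : Fin p,
        Integrable (fun ω => (∑ k ∈ univ \ {j}, Δ k ω) ^ 2) μ := fun j =>
      (memLp_finset_sum (univ \ {j}) (fun k _ => hΔ k)).integrable_sq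
    have hsq : ∀ k : Fin p, Integrable (fun ω => Δ k ω ^ 2) μ := fun k =>
      (hΔ k).integrable_sq
    have hmul : ∀ j k : Fin p, Integrable (fun ω => Δ j ω * Δ k ω) μ := fun j k =>
      memL2_mul_integrable (hΔ j) (hΔ k)
    set T : Finset (Fin p) := univ \ {i, c} with hT
    -- pointwise decompositions
    have hdecomp : ∀ ω, ∑ k ∈ univ \ {i}, Δ k ω = Δ c ω + ∑ k ∈ T, Δ k ω := by
      intro ω
      have hc : c ∈ univ \ {i} := by simp [Ne.symm hic]
      rw [Finset.sum_eq_sum_sdiff_singleton_add hc]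
      have : (univ \ {i}) \ {c} = T := by
        rw [hT, sdiff_sdiff]
        congr 1
      rw [this]; ring
    have hdecomp' : ∀ ω, ∑ k ∈ univ \ {c}, Δ k ω = Δ i ω + ∑ k ∈ T, Δ k ω := by
      intro ω
      have hc : i ∈ univ \ {c} := by simp [hic]
      rw [Finset.sum_eq_sum_sdiff_singleton_add hc]
      have : (univ \ {c}) \ {i} = T := by
        rw [hT, sdiff_sdiff]
        congr 1
        ext x; simp [or_comm]
      rw [this]; ring
    -- the difference function
    have hkey : ∀ ω, (∑ k ∈ univ \ {i}, Δ k ω) ^ 2 - (∑ k ∈ univ \ {c}, Δ k ω) ^ 2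
        = (Δ c ω ^ 2 - Δ i ω ^ 2)
          + 2 * ∑ k ∈ T, (Δ c ω * Δ k ω - Δ i ω * Δ k ω) := by
      intro ω
      rw [hdecomp ω, hdecomp' ω, Finset.sum_sub_distrib, ← Finset.mul_sum, ← Finset.mul_sum]
      ring
    have hintsum : Integrable
        (fun ω => ∑ k ∈ T, (Δ c ω * Δ k ω - Δ i ω * Δ k ω)) μ :=
      integrable_finset_sum T fun k _ => (hmul c k).sub (hmul i k)
    have hsub : (0:ℝ) ≤ ∫ ω, ((∑ k ∈ univ \ {i}, Δ k ω) ^ 2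
        - (∑ k ∈ univ \ {c}, Δ k ω) ^ 2) ∂μ := by
      have : ∫ ω, ((∑ k ∈ univ \ {i}, Δ k ω) ^ 2
          - (∑ k ∈ univ \ {c}, Δ k ω) ^ 2) ∂μ
          = (∫ ω, Δ c ω ^ 2 ∂μ - ∫ ω, Δ i ω ^ 2 ∂μ)
            + 2 * ∑ k ∈ T, (∫ ω, Δ c ω * Δ k ω ∂μ - ∫ ω, Δ i ω * Δ k ω ∂μ) := by
        rw [show (fun ω => (∑ k ∈ univ \ {i}, Δ k ω) ^ 2
            - (∑ k ∈ univ \ {c}, Δ k ω) ^ 2)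
            = fun ω => (Δ c ω ^ 2 - Δ i ω ^ 2)
              + 2 * ∑ k ∈ T, (Δ c ω * Δ k ω - Δ i ω * Δ k ω) from funext hkey,
          integral_add (show Integrable (fun ω => Δ c ω ^ 2 - Δ i ω ^ 2) μ from
            (hsq c).sub (hsq i)) (hintsum.const_mul 2),
          integral_sub (hsq c) (hsq i), integral_const_mul,
          integral_finset_sum T (fun k _ => show
            Integrable (fun ω => Δ c ω * Δ k ω - Δ i ω * Δ k ω) μ from
            (hmul c k).sub (hmul i k))]
        congr 1
        congr 1
        exact Finset.sum_congr rfl fun k _ => integral_sub (hmul c k) (hmul i k)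
      rw [this]
      have hA : (0:ℝ) ≤ ∫ ω, Δ c ω ^ 2 ∂μ - ∫ ω, Δ i ω ^ 2 ∂μ :=
        sub_nonneg.2 (h1 i hic)
      have hB : (0:ℝ) ≤ ∑ k ∈ T, (∫ ω, Δ c ω * Δ k ω ∂μ - ∫ ω, Δ i ω * Δ k ω ∂μ) := by
        apply Finset.sum_nonneg
        intro k hk
        have hk' : k ≠ i ∧ k ≠ c := by
          simpa [hT, not_or] using hk
        exact sub_nonneg.2 (h2 i k (Ne.symm hk'.1) hk'.2 hic)
      linarith
    have := integral_sub (hS i) (hS c)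
    rw [this] at hsub
    linarith
end
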